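/- arXiv:2305.17581 — 7 statements merged into one kernel-verified Lean document; each statement's English description precedes it below -/
import Mathlib

section
/- For linear regression with loss f_n(x) = (x^T a_n - b_n)^2, the gradient of the distillation loss f_n(x|θ,λ) = (1-λ)(x^T a_n - b_n)^2 + λ(x^T a_n - θ^T a_n)^2 with respect to x equals ∇f_n(x) - λ∇f_n(θ). -/
lemma sq_grad {d : ℕ} (a : EuclideanSpace ℝ (Fin d)) (c : ℝ) (y : EuclideanSpace ℝ (Fin d)) :
    HasGradientAt (fun y : EuclideanSpace ℝ (Fin d) => ((inner ℝ y a : ℝ) - c) ^ 2)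
      ((2 * ((inner ℝ y a : ℝ) - c)) • a) y := by
  rw [hasGradientAt_iff_hasFDerivAt]
  have h1 : HasFDerivAt (fun y : EuclideanSpace ℝ (Fin d) => ((inner ℝ y a : ℝ) - c))
      (innerSL ℝ a) y := by
    have heq : (fun y : EuclideanSpace ℝ (Fin d) => ((inner ℝ y a : ℝ) - c))
        = fun y => (innerSL ℝ a) y - c := by
      ext z; simp only [innerSL_apply_apply]; rw [real_inner_comm]
    rw [heq]
    exact ((innerSL ℝ a).hasFDerivAt (x := y)).sub_const c
  have h2 := h1.mul h1
  simp only [sq]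
  refine h2.congr_fderiv ?_
  ext w
  simp [real_inner_comm]
  ring

lemma grad_comb {d : ℕ} {f g : EuclideanSpace ℝ (Fin d) → ℝ}
    {fg gg : EuclideanSpace ℝ (Fin d)} {x : EuclideanSpace ℝ (Fin d)} (c e : ℝ)
    (hf : HasGradientAt f fg x) (hg : HasGradientAt g gg x) :
    HasGradientAt (fun y => c * f y + e * g y) (c • fg + e • gg) x := by
  rw [hasGradientAt_iff_hasFDerivAt] at *
  have h := (hf.const_smul c).add (hg.const_smul e)
  refine h.congr_fderiv ?_
  · ext y; simp [mul_comm]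

theorem linreg_distillation_gradient {d : ℕ}
    (a : EuclideanSpace ℝ (Fin d)) (b lam : ℝ)
    (x θ : EuclideanSpace ℝ (Fin d))
    (f : EuclideanSpace ℝ (Fin d) → ℝ)
    (hf : f = fun y => ((inner ℝ y a : ℝ) - b) ^ 2)
    (fdist : EuclideanSpace ℝ (Fin d) → ℝ)
    (hfdist : fdist = fun y => (1 - lam) * ((inner ℝ y a : ℝ) - b) ^ 2
      + lam * ((inner ℝ y a : ℝ) - (inner ℝ θ a : ℝ)) ^ 2) :
    gradient fdist x = gradient f x - lam • gradient f θ := by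
  subst hf hfdist
  have hx := (sq_grad a b x).gradient
  have hθ := (sq_grad a b θ).gradient
  have hd : HasGradientAt (fun y : EuclideanSpace ℝ (Fin d) =>
      (1 - lam) * ((inner ℝ y a : ℝ) - b) ^ 2 + lam * ((inner ℝ y a : ℝ) - (inner ℝ θ a : ℝ)) ^ 2)
      ((1 - lam) • ((2 * ((inner ℝ x a : ℝ) - b)) • a)
        + lam • ((2 * ((inner ℝ x a : ℝ) - (inner ℝ θ a : ℝ))) • a)) x :=
    grad_comb _ _ (sq_grad a b x) (sq_grad a (inner ℝ θ a) x)
  rw [hd.gradient, hx, hθ, smul_smul, smul_smul, ← add_smul, smul_smul]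
  have : (1 - lam) * (2 * ((inner ℝ x a : ℝ) - b)) + lam * (2 * ((inner ℝ x a : ℝ) - (inner ℝ θ a : ℝ)))
      = 2 * ((inner ℝ x a : ℝ) - b) - lam * (2 * ((inner ℝ θ a : ℝ) - b)) := by ring
  rw [this, sub_smul, mul_smul]
end

section
/- With λ* as the minimizer of N(λ) = λ²‖∇f(θ)‖² + cγ E[‖∇f_ξ(x*) - λ∇f_ξ(θ)‖²], and assuming E[∇f_ξ(x*)] = 0, the ratio N(λ*)/N(0) equals 1 - ρ²(x*,θ)(1 - β(θ))/(1 + β(θ)/(cγ)), where β(θ) = ‖∇f(θ)‖²/E[‖∇f_ξ(θ)‖²] and ρ(x*,θ) is the correlation coefficient between ∇f_ξ(x*) and ∇f_ξ(θ). -/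
open MeasureTheory

theorem variance_reduction_ratio {d : ℕ} {Ω : Type*} [MeasureSpace Ω]
    (μ : Measure Ω) [IsProbabilityMeasure μ]
    -- A ω = ∇f_ξ(x*), B ω = ∇f_ξ(θ)
    (A B : Ω → EuclideanSpace ℝ (Fin d))
    (hA2 : Integrable (fun ω => ‖A ω‖ ^ 2) μ)
    (hB2 : Integrable (fun ω => ‖B ω‖ ^ 2) μ)
    (hAB : Integrable (fun ω => (inner ℝ (A ω) (B ω) : ℝ)) μ)
    (hAint : Integrable A μ) (hBint : Integrable B μ)
    (hAmean : ∫ ω, A ω ∂μ = 0)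
    (g : EuclideanSpace ℝ (Fin d)) (hg : g = ∫ ω, B ω ∂μ)
    (hApos : 0 < ∫ ω, ‖A ω‖ ^ 2 ∂μ)
    (hBpos : 0 < ∫ ω, ‖B ω‖ ^ 2 ∂μ)
    (c γ : ℝ) (hc : 0 < c) (hγ : 0 < γ)
    (N : ℝ → ℝ)
    (hN : N = fun lam => lam ^ 2 * ‖g‖ ^ 2 + c * γ * ∫ ω, ‖A ω - lam • B ω‖ ^ 2 ∂μ)
    (lamstar : ℝ)
    (hlamstar : lamstar = (∫ ω, (inner ℝ (A ω) (B ω) : ℝ) ∂μ) /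
      ((∫ ω, ‖B ω‖ ^ 2 ∂μ) + (1 / (c * γ)) * ‖g‖ ^ 2))
    (β : ℝ) (hβ : β = ‖g‖ ^ 2 / ∫ ω, ‖B ω‖ ^ 2 ∂μ)
    (ρ : ℝ) (hρ : ρ = (∫ ω, (inner ℝ (A ω) (B ω) : ℝ) ∂μ) /
      (Real.sqrt (∫ ω, ‖A ω‖ ^ 2 ∂μ) *
       Real.sqrt ((∫ ω, ‖B ω‖ ^ 2 ∂μ) - ‖g‖ ^ 2))) :
    N lamstar / N 0 = 1 - ρ ^ 2 * (1 - β) / (1 + β / (c * γ)) := by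
  set IA := ∫ ω, ‖A ω‖ ^ 2 ∂μ with hIAdef
  set IB := ∫ ω, ‖B ω‖ ^ 2 ∂μ with hIBdef
  set S := ∫ ω, (inner ℝ (A ω) (B ω) : ℝ) ∂μ with hSdef
  set G := ‖g‖ ^ 2 with hGdef
  have hcγ : 0 < c * γ := mul_pos hc hγ
  -- expansion of the integral
  have hexp : ∀ lam : ℝ, (∫ ω, ‖A ω - lam • B ω‖ ^ 2 ∂μ)
      = IA - 2 * lam * S + lam ^ 2 * IB := by
    intro lam
    have h1 : ∀ ω, ‖A ω - lam • B ω‖ ^ 2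
        = ‖A ω‖ ^ 2 - 2 * lam * (inner ℝ (A ω) (B ω) : ℝ) + lam ^ 2 * ‖B ω‖ ^ 2 := by
      intro ω
      rw [norm_sub_sq_real, real_inner_smul_right, norm_smul, mul_pow,
        Real.norm_eq_abs, sq_abs]
      ring
    have hi1 : Integrable (fun ω => ‖A ω‖ ^ 2 - 2 * lam * (inner ℝ (A ω) (B ω) : ℝ)) μ :=
      hA2.sub (hAB.const_mul _)
    have hi2 : Integrable (fun ω => lam ^ 2 * ‖B ω‖ ^ 2) μ := hB2.const_mul _
    simp_rw [h1]
    rw [integral_add hi1 hi2, integral_sub hA2 (hAB.const_mul _),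
      integral_const_mul, integral_const_mul]
  -- variance identity : ∫ ‖B - g‖^2 = IB - G
  have hBg2 : ∀ ω, ‖B ω - g‖ ^ 2 = ‖B ω‖ ^ 2 - 2 * (inner ℝ g (B ω) : ℝ) + G := by
    intro ω
    rw [norm_sub_sq_real, real_inner_comm]
  have hinnergB : Integrable (fun ω => (inner ℝ g (B ω) : ℝ)) μ := by
    exact (hBint.inner_const g).congr (by
      filter_upwards with ω using real_inner_comm _ _)
  have hintgB : (∫ ω, (inner ℝ g (B ω) : ℝ) ∂μ) = G := by
    rw [integral_inner hBint g, ← hg, hGdef, real_inner_self_eq_norm_sq]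
  have hvar : (∫ ω, ‖B ω - g‖ ^ 2 ∂μ) = IB - G := by
    have hi1 : Integrable (fun ω => ‖B ω‖ ^ 2 - 2 * (inner ℝ g (B ω) : ℝ)) μ :=
      hB2.sub (hinnergB.const_mul _)
    simp_rw [hBg2]
    rw [integral_add hi1 (integrable_const _), integral_sub hB2 (hinnergB.const_mul _),
      integral_const_mul, hintgB, integral_const, probReal_univ]
    simp
    ring
  have hIBG : G ≤ IB := by
    have h0 : (0:ℝ) ≤ ∫ ω, ‖B ω - g‖ ^ 2 ∂μ := integral_nonneg fun ω => sq_nonneg _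
    rw [hvar] at h0; linarith
  have hNlam : ∀ lam : ℝ, N lam
      = lam ^ 2 * G + c * γ * (IA - 2 * lam * S + lam ^ 2 * IB) := by
    intro lam; rw [hN]; dsimp only; rw [hexp lam]
  -- degenerate case lemma: if IB = G then S = 0
  have hSz0 : IB - G = 0 → S = 0 := by
    intro hdeg
    have hInt : Integrable (fun ω => ‖B ω - g‖ ^ 2) μ := by
      have h' : Integrable (fun ω => ‖B ω‖ ^ 2 - 2 * (inner ℝ g (B ω) : ℝ) + G) μ :=
        (hB2.sub (hinnergB.const_mul _)).add (integrable_const _)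
      exact h'.congr (by filter_upwards with ω using (hBg2 ω).symm)
    have hzero : (∫ ω, ‖B ω - g‖ ^ 2 ∂μ) = 0 := by rw [hvar, hdeg]
    have hae : ∀ᵐ ω ∂μ, ‖B ω - g‖ ^ 2 = 0 :=
      ((integral_eq_zero_iff_of_nonneg (fun ω => sq_nonneg _) hInt).mp hzero)
    have haeB : ∀ᵐ ω ∂μ, B ω = g := by
      filter_upwards [hae] with ω h
      have h1 : ‖B ω - g‖ = 0 := by
        have := sq_nonneg (‖B ω - g‖); nlinarith [norm_nonneg (B ω - g)]
      exact sub_eq_zero.mp (norm_eq_zero.mp h1)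
    have hS' : S = ∫ ω, (inner ℝ (A ω) g : ℝ) ∂μ := by
      rw [hSdef]
      apply integral_congr_ae
      filter_upwards [haeB] with ω h
      rw [h]
    have hS'' : S = ∫ ω, (inner ℝ g (A ω) : ℝ) ∂μ := by
      rw [hS']; apply integral_congr_ae
      filter_upwards with ω using real_inner_comm _ _
    rw [hS'', integral_inner hAint g, hAmean, inner_zero_right]
  have hGnn : (0:ℝ) ≤ G := by rw [hGdef]; positivity
  clear_value IA IB S G
  clear hIAdef hIBdef hSdef hGdef hg hAmean
  have hD : (0:ℝ) < IB + 1 / (c * γ) * G := by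
    have h0 : 0 ≤ 1 / (c * γ) * G := mul_nonneg (by positivity) hGnn
    linarith
  have hDne : IB + 1 / (c * γ) * G ≠ 0 := ne_of_gt hD
  have hN0 : N 0 = c * γ * IA := by rw [hNlam 0]; ring
  have hNls : N lamstar = c * γ * (IA - S ^ 2 / (IB + 1 / (c * γ) * G)) := by
    rw [hNlam, hlamstar, div_pow]
    field_simp
    ring
  have hN0ne : N 0 ≠ 0 := by rw [hN0]; positivity
  rw [hNls, hN0, hρ, hβ]
  by_cases hdeg : IB - G = 0
  · rw [hSz0 hdeg, hdeg, Real.sqrt_zero, mul_zero]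
    simp
    exact ⟨⟨hc.ne', hγ.ne'⟩, hApos.ne'⟩
  · have hIBGpos : 0 < IB - G := lt_of_le_of_ne (by linarith) (Ne.symm hdeg)
    rw [div_pow, mul_pow, Real.sq_sqrt hApos.le, Real.sq_sqrt hIBGpos.le]
    have hIAne : IA ≠ 0 := ne_of_gt hApos
    have hIBne : IB ≠ 0 := ne_of_gt hBpos
    have hden : 1 + G / IB / (c * γ) ≠ 0 := by
      have : 0 ≤ G / IB / (c * γ) := by positivity
      linarith
    field_simp
end

section
/- Under strong quasi-convexity with parameter μ and expected smoothness with constant L_exp, the self-distillation SGD iterates x^{t+1} = x^t - γ(∇f_ξ(x^t) - λ∇f_ξ(θ)) with step size γ ≤ 1/(8 L_exp) satisfy the one-step descent inequality E_t[‖x^{t+1} - x*‖²] ≤ (1-γμ)‖x^t - x*‖² + (8γ/μ)λ²‖∇f(θ)‖² + 2γ² E[‖∇f_ξ(x*) - λ∇f_ξ(θ)‖²]. -/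
open MeasureTheory

lemma fderiv_inner_gradient {d : ℕ} (f : EuclideanSpace ℝ (Fin d) → ℝ)
    (hdiff : Differentiable ℝ f) (y v : EuclideanSpace ℝ (Fin d)) :
    fderiv ℝ f y v = (inner ℝ (gradient f y) v : ℝ) := by
  have h := (hdiff y).hasGradientAt.hasFDerivAt
  rw [h.fderiv, InnerProductSpace.toDual_apply_apply]

lemma quad_growth {d : ℕ} (f : EuclideanSpace ℝ (Fin d) → ℝ)
    (hdiff : Differentiable ℝ f) (μ : ℝ)
    (xstar : EuclideanSpace ℝ (Fin d)) (hmin : ∀ y, f xstar ≤ f y)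
    (hqc : ∀ x, f xstar ≥ f x + (inner ℝ (gradient f x) (xstar - x) : ℝ)
      + μ / 2 * ‖xstar - x‖ ^ 2)
    (x : EuclideanSpace ℝ (Fin d)) :
    μ / 4 * ‖x - xstar‖ ^ 2 ≤ f x - f xstar := by
  set v := x - xstar with hv
  set h : ℝ → ℝ := fun s => f (xstar + s • v) - μ / 4 * ‖v‖ ^ 2 * s ^ 2 with hh
  have hc : ∀ s : ℝ, HasDerivAt (fun s : ℝ => xstar + s • v) v s := by
    intro s
    simpa using ((hasDerivAt_id s).smul_const v).const_add xstar
  have hder : ∀ s : ℝ, HasDerivAt h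
      ((inner ℝ (gradient f (xstar + s • v)) v : ℝ) - μ / 2 * ‖v‖ ^ 2 * s) s := by
    intro s
    have h1 : HasDerivAt (fun s : ℝ => f (xstar + s • v))
        (fderiv ℝ f (xstar + s • v) v) s :=
      (hdiff (xstar + s • v)).hasFDerivAt.comp_hasDerivAt s (hc s)
    rw [fderiv_inner_gradient f hdiff] at h1
    have h2 : HasDerivAt (fun s : ℝ => μ / 4 * ‖v‖ ^ 2 * s ^ 2)
        (μ / 4 * ‖v‖ ^ 2 * (2 * s)) s := by
      simpa using ((hasDerivAt_pow 2 s).const_mul (μ / 4 * ‖v‖ ^ 2))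
    have := h1.sub h2
    refine this.congr_deriv ?_
    ring
  have hmono : MonotoneOn h (Set.Icc 0 1) := by
    apply monotoneOn_of_deriv_nonneg (convex_Icc 0 1)
    · exact (fun s _ => ((hder s).differentiableAt.continuousAt.continuousWithinAt))
    · intro s hs
      exact (hder s).differentiableAt.differentiableWithinAt
    · intro s hs
      rw [interior_Icc] at hs
      rw [(hder s).deriv]
      have hqcs := hqc (xstar + s • v)
      have e1 : xstar - (xstar + s • v) = -(s • v) := by abel
      rw [e1, inner_neg_right, real_inner_smul_right] at hqcs
      have e3 : ‖-(s • v)‖ ^ 2 = s ^ 2 * ‖v‖ ^ 2 := by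
        rw [norm_neg, norm_smul]
        simp [mul_pow, sq_abs]
      rw [e3] at hqcs
      have hfs : f xstar ≤ f (xstar + s • v) := hmin _
      have hs0 : 0 < s := hs.1
      nlinarith [hqcs, hfs, hs0]
  have h01 := hmono (Set.mem_Icc.mpr ⟨le_refl 0, zero_le_one⟩)
    (Set.mem_Icc.mpr ⟨zero_le_one, le_refl 1⟩) zero_le_one
  have e0 : h 0 = f xstar := by simp [hh]
  have e1 : h 1 = f x - μ / 4 * ‖v‖ ^ 2 := by
    have hx : xstar + v = x := by
      rw [hv]; abel
    simp [hh, hx]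
  rw [e0, e1] at h01
  linarith

set_option maxHeartbeats 1000000 in
theorem sd_sgd_one_step_str_quasi_cvx {d : ℕ} {Ω : Type*} [MeasureSpace Ω]
    (P : Measure Ω) [IsProbabilityMeasure P]
    (f : EuclideanSpace ℝ (Fin d) → ℝ) (hdiff : Differentiable ℝ f)
    (μ Lexp γ lam : ℝ) (hμ : 0 < μ) (hLexp : 0 < Lexp)
    (hγ : 0 < γ) (hγle : γ ≤ 1 / (8 * Lexp))
    (xstar : EuclideanSpace ℝ (Fin d)) (hmin : ∀ y, f xstar ≤ f y)
    -- strong quasi-convexity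
    (hqc : ∀ x, f xstar ≥ f x + (inner ℝ (gradient f x) (xstar - x) : ℝ)
      + μ / 2 * ‖xstar - x‖ ^ 2)
    -- stochastic gradient oracle
    (G : Ω → EuclideanSpace ℝ (Fin d) → EuclideanSpace ℝ (Fin d))
    (hGint : ∀ x, Integrable (fun ω => G ω x) P)
    (hG2int : ∀ x y : EuclideanSpace ℝ (Fin d),
      Integrable (fun ω => ‖G ω x - lam • G ω y‖ ^ 2) P)
    (hunbiased : ∀ x, ∫ ω, G ω x ∂P = gradient f x)
    -- expected smoothness
    (hES : ∀ x, ∫ ω, ‖G ω x - G ω xstar‖ ^ 2 ∂P ≤ 2 * Lexp * (f x - f xstar))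
    (θ xt : EuclideanSpace ℝ (Fin d)) :
    ∫ ω, ‖xt - γ • (G ω xt - lam • G ω θ) - xstar‖ ^ 2 ∂P
      ≤ (1 - γ * μ) * ‖xt - xstar‖ ^ 2
        + (8 * γ / μ) * lam ^ 2 * ‖gradient f θ‖ ^ 2
        + 2 * γ ^ 2 * ∫ ω, ‖G ω xstar - lam • G ω θ‖ ^ 2 ∂P := by
  have hsmθ : Integrable (fun ω => lam • G ω θ) P := by
    exact (hGint θ).smul lam
  have hv_int : Integrable (fun ω => G ω xt - lam • G ω θ) P := by
    exact (hGint xt).sub hsmθ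
  have hinner_int : Integrable
      (fun ω => (inner ℝ (xt - xstar) (G ω xt - lam • G ω θ) : ℝ)) P :=
    hv_int.const_inner _
  -- pointwise expansion of the squared norm
  have key : ∀ ω, ‖xt - γ • (G ω xt - lam • G ω θ) - xstar‖ ^ 2
      = ‖xt - xstar‖ ^ 2
        - 2 * γ * (inner ℝ (xt - xstar) (G ω xt - lam • G ω θ) : ℝ)
        + γ ^ 2 * ‖G ω xt - lam • G ω θ‖ ^ 2 := by
    intro ω
    have e : xt - γ • (G ω xt - lam • G ω θ) - xstar
        = (xt - xstar) - γ • (G ω xt - lam • G ω θ) := by abel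
    rw [e, norm_sub_sq_real, real_inner_smul_right, norm_smul]
    simp [mul_pow, sq_abs]
    ring
  -- mean of the stochastic direction
  have hmean : ∫ ω, (G ω xt - lam • G ω θ) ∂P
      = gradient f xt - lam • gradient f θ := by
    rw [integral_sub (hGint xt) hsmθ, integral_smul, hunbiased xt, hunbiased θ]
  -- integrability for the expansion
  have hf1 : Integrable (fun ω => ‖xt - xstar‖ ^ 2
      - 2 * γ * (inner ℝ (xt - xstar) (G ω xt - lam • G ω θ) : ℝ)) P := by
    exact (integrable_const _).sub (hinner_int.const_mul _)
  have hf2 : Integrable (fun ω => γ ^ 2 * ‖G ω xt - lam • G ω θ‖ ^ 2) P :=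
    (hG2int xt θ).const_mul _
  -- the expansion of the integral
  have hI : ∫ ω, ‖xt - γ • (G ω xt - lam • G ω θ) - xstar‖ ^ 2 ∂P
      = ‖xt - xstar‖ ^ 2
        - 2 * γ * (inner ℝ (xt - xstar) (gradient f xt - lam • gradient f θ) : ℝ)
        + γ ^ 2 * ∫ ω, ‖G ω xt - lam • G ω θ‖ ^ 2 ∂P := by
    simp_rw [key]
    rw [integral_add hf1 hf2,
      integral_sub (integrable_const _) (hinner_int.const_mul _),
      integral_const_mul, integral_const_mul, integral_inner hv_int, hmean,
      integral_const]
    simp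
  rw [hI]
  have hSnn : (0:ℝ) ≤ ∫ ω, ‖G ω xstar - lam • G ω θ‖ ^ 2 ∂P :=
    integral_nonneg fun ω => by positivity
  have hd1meas : AEStronglyMeasurable (fun ω => ‖G ω xt - G ω xstar‖ ^ 2) P := by
    exact (((hGint xt).aestronglyMeasurable.sub
      (hGint xstar).aestronglyMeasurable).norm.pow 2)
  have hptw : ∀ ω : Ω, ‖G ω xt - G ω xstar‖ ^ 2
      ≤ 2 * ‖G ω xt - lam • G ω θ‖ ^ 2 + 2 * ‖G ω xstar - lam • G ω θ‖ ^ 2 := by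
    intro ω
    have e : G ω xt - G ω xstar
        = (G ω xt - lam • G ω θ) - (G ω xstar - lam • G ω θ) := by abel
    rw [e]
    have h1 := norm_sub_le (G ω xt - lam • G ω θ) (G ω xstar - lam • G ω θ)
    nlinarith [norm_nonneg ((G ω xt - lam • G ω θ) - (G ω xstar - lam • G ω θ)),
      sq_nonneg (‖G ω xt - lam • G ω θ‖ - ‖G ω xstar - lam • G ω θ‖)]
  have hd1int : Integrable (fun ω => ‖G ω xt - G ω xstar‖ ^ 2) P := by
    apply Integrable.mono' (((hG2int xt θ).const_mul 2).add
      ((hG2int xstar θ).const_mul 2)) hd1meas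
    filter_upwards with ω
    rw [Real.norm_eq_abs, abs_of_nonneg (by positivity)]
    exact hptw ω
  have hptw2 : ∀ ω : Ω, ‖G ω xt - lam • G ω θ‖ ^ 2
      ≤ 2 * ‖G ω xt - G ω xstar‖ ^ 2 + 2 * ‖G ω xstar - lam • G ω θ‖ ^ 2 := by
    intro ω
    have e : G ω xt - lam • G ω θ
        = (G ω xt - G ω xstar) + (G ω xstar - lam • G ω θ) := by abel
    rw [e]
    have h1 := norm_add_le (G ω xt - G ω xstar) (G ω xstar - lam • G ω θ)
    nlinarith [norm_nonneg ((G ω xt - G ω xstar) + (G ω xstar - lam • G ω θ)),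
      sq_nonneg (‖G ω xt - G ω xstar‖ - ‖G ω xstar - lam • G ω θ‖)]
  have hδ0 : (0:ℝ) ≤ f xt - f xstar := by linarith [hmin xt]
  -- second moment bound
  have hI2 : ∫ ω, ‖G ω xt - lam • G ω θ‖ ^ 2 ∂P
      ≤ 4 * Lexp * (f xt - f xstar)
        + 2 * ∫ ω, ‖G ω xstar - lam • G ω θ‖ ^ 2 ∂P := by
    have step1 : ∫ ω, ‖G ω xt - lam • G ω θ‖ ^ 2 ∂P
        ≤ ∫ ω, (2 * ‖G ω xt - G ω xstar‖ ^ 2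
            + 2 * ‖G ω xstar - lam • G ω θ‖ ^ 2) ∂P :=
      integral_mono (hG2int xt θ)
        ((hd1int.const_mul 2).add ((hG2int xstar θ).const_mul 2)) hptw2
    rw [integral_add (hd1int.const_mul 2) ((hG2int xstar θ).const_mul 2),
      integral_const_mul, integral_const_mul] at step1
    linarith [hES xt]
  -- inner product bounds
  have hP1 : (inner ℝ (xt - xstar) (gradient f xt) : ℝ)
      ≥ (f xt - f xstar) + μ / 2 * ‖xt - xstar‖ ^ 2 := by
    have hq := hqc xt
    have e1 : xstar - xt = -(xt - xstar) := by abel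
    rw [e1, inner_neg_right, real_inner_comm] at hq
    rw [norm_neg] at hq
    linarith
  have hP2 : |(inner ℝ (xt - xstar) (gradient f θ) : ℝ)|
      ≤ ‖xt - xstar‖ * ‖gradient f θ‖ := abs_real_inner_le_norm _ _
  have hQG : f xt - f xstar ≥ μ / 4 * ‖xt - xstar‖ ^ 2 :=
    quad_growth f hdiff μ xstar hmin hqc xt
  -- Young's inequality piece
  have young : 2 * (lam * (inner ℝ (xt - xstar) (gradient f θ) : ℝ))
      ≤ 8 / μ * lam ^ 2 * ‖gradient f θ‖ ^ 2 + μ / 8 * ‖xt - xstar‖ ^ 2 := by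
    have h1 : lam * (inner ℝ (xt - xstar) (gradient f θ) : ℝ)
        ≤ |lam| * (‖xt - xstar‖ * ‖gradient f θ‖) := by
      calc lam * (inner ℝ (xt - xstar) (gradient f θ) : ℝ)
          ≤ |lam * (inner ℝ (xt - xstar) (gradient f θ) : ℝ)| := le_abs_self _
        _ = |lam| * |(inner ℝ (xt - xstar) (gradient f θ) : ℝ)| := abs_mul _ _
        _ ≤ |lam| * (‖xt - xstar‖ * ‖gradient f θ‖) :=
            mul_le_mul_of_nonneg_left hP2 (abs_nonneg lam)
    have hid : 8 / μ * lam ^ 2 * ‖gradient f θ‖ ^ 2 + μ / 8 * ‖xt - xstar‖ ^ 2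
        - 2 * (|lam| * (‖xt - xstar‖ * ‖gradient f θ‖))
        = (8 * (|lam| * ‖gradient f θ‖) - μ * ‖xt - xstar‖) ^ 2 / (8 * μ) := by
      have habs : |lam| ^ 2 = lam ^ 2 := sq_abs lam
      field_simp
      linear_combination (-(64:ℝ) * ‖gradient f θ‖ ^ 2) * habs
    have hr : (0:ℝ) ≤ (8 * (|lam| * ‖gradient f θ‖) - μ * ‖xt - xstar‖) ^ 2 / (8 * μ) :=
      div_nonneg (sq_nonneg _) (by positivity)
    linarith
  -- reduce the inner product
  rw [inner_sub_right, real_inner_smul_right]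
  -- final arithmetic
  have e1 : -(2 * γ) * (inner ℝ (xt - xstar) (gradient f xt) : ℝ)
      ≤ -(2 * γ) * ((f xt - f xstar) + μ / 2 * ‖xt - xstar‖ ^ 2) := by
    have := mul_le_mul_of_nonneg_left hP1 hγ.le
    nlinarith [this]
  have e2 : γ * (2 * (lam * (inner ℝ (xt - xstar) (gradient f θ) : ℝ)))
      ≤ 8 * γ / μ * lam ^ 2 * ‖gradient f θ‖ ^ 2
          + γ * (μ / 8 * ‖xt - xstar‖ ^ 2) := by
    calc γ * (2 * (lam * (inner ℝ (xt - xstar) (gradient f θ) : ℝ)))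
        ≤ γ * (8 / μ * lam ^ 2 * ‖gradient f θ‖ ^ 2
            + μ / 8 * ‖xt - xstar‖ ^ 2) :=
          mul_le_mul_of_nonneg_left young hγ.le
      _ = 8 * γ / μ * lam ^ 2 * ‖gradient f θ‖ ^ 2
            + γ * (μ / 8 * ‖xt - xstar‖ ^ 2) := by ring
  have e3 : γ ^ 2 * ∫ ω, ‖G ω xt - lam • G ω θ‖ ^ 2 ∂P
      ≤ γ ^ 2 * (4 * Lexp * (f xt - f xstar)
          + 2 * ∫ ω, ‖G ω xstar - lam • G ω θ‖ ^ 2 ∂P) :=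
    mul_le_mul_of_nonneg_left hI2 (sq_nonneg γ)
  have hγL : γ * Lexp ≤ 1 / 8 := by
    rw [le_div_iff₀ (by positivity)] at hγle
    linarith
  have e4 : 4 * γ ^ 2 * Lexp * (f xt - f xstar) ≤ γ / 2 * (f xt - f xstar) := by
    nlinarith [mul_le_mul_of_nonneg_left hγL
      (show (0:ℝ) ≤ 4 * γ * (f xt - f xstar) by positivity)]
  have e6 : γ * (μ / 4 * ‖xt - xstar‖ ^ 2) ≤ γ * (f xt - f xstar) :=
    mul_le_mul_of_nonneg_left hQG hγ.le
  have e7 : 0 ≤ γ * (f xt - f xstar) := mul_nonneg hγ.le hδ0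
  linarith [e1, e2, e3, e4, e6, e7]
end

section
/- If f satisfies the PL condition with parameter μ and is L-smooth, and the stochastic gradients satisfy expected smoothness with constant L_exp, then the self-distillation iterates x^{t+1} = x^t - γ(∇f_ξ(x^t) - λ∇f_ξ(θ)) with γ ≤ μ/(4 L_exp L) satisfy E_t[f(x^{t+1}) - f*] ≤ (1-γμ)(f(x^t) - f*) + γλ²‖∇f(θ)‖² + Lγ² E[‖∇f_ξ(x*) - λ∇f_ξ(θ)‖²]. -/
open MeasureTheory

lemma young_aux (l A B i : ℝ) (h : l * i ≤ |l| * (A * B)) :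
    l * i ≤ 1/4 * A ^ 2 + l ^ 2 * B ^ 2 := by
  nlinarith [sq_nonneg (A / 2 - |l| * B), sq_abs l]

theorem sd_sgd_one_step_pl {d : ℕ} {Ω : Type*} [MeasureSpace Ω]
    (P : Measure Ω) [IsProbabilityMeasure P]
    (f : EuclideanSpace ℝ (Fin d) → ℝ) (hdiff : Differentiable ℝ f)
    (μ L Lexp γ lam : ℝ) (hμ : 0 < μ) (hL : 0 < L) (hLexp : 0 < Lexp)
    (hγ : 0 < γ) (hγle : γ ≤ μ / (4 * Lexp * L))
    (xstar : EuclideanSpace ℝ (Fin d)) (hmin : ∀ y, f xstar ≤ f y)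
    -- L-smoothness
    (hsmooth : ∀ x y, f y ≤ f x + (inner ℝ (gradient f x) (y - x) : ℝ)
      + L / 2 * ‖y - x‖ ^ 2)
    -- PL condition
    (hPL : ∀ x, ‖gradient f x‖ ^ 2 ≥ 2 * μ * (f x - f xstar))
    (G : Ω → EuclideanSpace ℝ (Fin d) → EuclideanSpace ℝ (Fin d))
    (hGint : ∀ x, Integrable (fun ω => G ω x) P)
    (hG2int : ∀ x y : EuclideanSpace ℝ (Fin d),
      Integrable (fun ω => ‖G ω x - lam • G ω y‖ ^ 2) P)
    (hunbiased : ∀ x, ∫ ω, G ω x ∂P = gradient f x)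
    (hES : ∀ x, ∫ ω, ‖G ω x - G ω xstar‖ ^ 2 ∂P ≤ 2 * Lexp * (f x - f xstar))
    (θ xt : EuclideanSpace ℝ (Fin d))
    (hfint : Integrable (fun ω => f (xt - γ • (G ω xt - lam • G ω θ))) P) :
    ∫ ω, (f (xt - γ • (G ω xt - lam • G ω θ)) - f xstar) ∂P
      ≤ (1 - γ * μ) * (f xt - f xstar)
        + γ * lam ^ 2 * ‖gradient f θ‖ ^ 2
        + L * γ ^ 2 * ∫ ω, ‖G ω xstar - lam • G ω θ‖ ^ 2 ∂P := by
  set g : Ω → EuclideanSpace ℝ (Fin d) := fun ω => G ω xt - lam • G ω θ with hgdef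
  set b : Ω → EuclideanSpace ℝ (Fin d) := fun ω => G ω xstar - lam • G ω θ with hbdef
  set a : Ω → EuclideanSpace ℝ (Fin d) := fun ω => G ω xt - G ω xstar with hadef
  have hsmulInt : Integrable (fun ω => lam • G ω θ) P := (hGint θ).smul lam
  have hgInt : Integrable g P := (hGint xt).sub hsmulInt
  have hg2Int : Integrable (fun ω => ‖g ω‖ ^ 2) P := hG2int xt θ
  have hb2Int : Integrable (fun ω => ‖b ω‖ ^ 2) P := hG2int xstar θ
  have haInt : Integrable a P := (hGint xt).sub (hGint xstar)
  have hab : ∀ ω, g ω = a ω + b ω := by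
    intro ω; simp only [hgdef, hadef, hbdef]; abel
  have ha2Int : Integrable (fun ω => ‖a ω‖ ^ 2) P := by
    refine Integrable.mono' ((hg2Int.const_mul 2).add (hb2Int.const_mul 2))
      ((haInt.aestronglyMeasurable.norm.pow 2)) ?_
    filter_upwards with ω
    simp only [Pi.add_apply]
    have hba : a ω = g ω - b ω := by rw [hab ω]; abel
    rw [Real.norm_of_nonneg (by positivity), hba]
    nlinarith [norm_sub_le (g ω) (b ω), sq_nonneg (‖g ω‖ - ‖b ω‖),
      norm_nonneg (g ω), norm_nonneg (b ω), norm_nonneg (g ω - b ω)]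
  have hΔ : 0 ≤ f xt - f xstar := sub_nonneg.2 (hmin xt)
  have hEb2 : 0 ≤ ∫ ω, ‖b ω‖ ^ 2 ∂P :=
    integral_nonneg fun ω => by positivity
  -- bound on E ‖g‖²
  have hEg2 : ∫ ω, ‖g ω‖ ^ 2 ∂P
      ≤ 4 * Lexp * (f xt - f xstar) + 2 * ∫ ω, ‖b ω‖ ^ 2 ∂P := by
    have step : ∫ ω, ‖g ω‖ ^ 2 ∂P ≤ ∫ ω, (2 * ‖a ω‖ ^ 2 + 2 * ‖b ω‖ ^ 2) ∂P := by
      refine integral_mono hg2Int ((ha2Int.const_mul 2).add (hb2Int.const_mul 2)) ?_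
      intro ω
      dsimp only
      rw [hab ω]
      nlinarith [norm_add_le (a ω) (b ω), sq_nonneg (‖a ω‖ - ‖b ω‖),
        norm_nonneg (a ω), norm_nonneg (b ω), norm_nonneg (a ω + b ω)]
    rw [integral_add (ha2Int.const_mul 2) (hb2Int.const_mul 2),
      integral_const_mul, integral_const_mul] at step
    have hESxt := hES xt
    have : ∫ ω, ‖a ω‖ ^ 2 ∂P ≤ 2 * Lexp * (f xt - f xstar) := hESxt
    linarith
  -- pointwise smoothness bound
  have key : ∀ ω, f (xt - γ • g ω) - f xstar
      ≤ (f xt - f xstar) - γ * (inner ℝ (gradient f xt) (g ω) : ℝ)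
        + L / 2 * γ ^ 2 * ‖g ω‖ ^ 2 := by
    intro ω
    have h := hsmooth xt (xt - γ • g ω)
    have h1 : xt - γ • g ω - xt = -(γ • g ω) := by abel
    rw [h1, inner_neg_right, real_inner_smul_right, norm_neg, norm_smul] at h
    have h2 : (‖γ‖ * ‖g ω‖) ^ 2 = γ ^ 2 * ‖g ω‖ ^ 2 := by
      rw [Real.norm_of_nonneg hγ.le]; ring
    rw [h2] at h
    linarith
  have hLHSint : Integrable (fun ω => f (xt - γ • g ω) - f xstar) P :=
    hfint.sub (integrable_const _)
  have hinnerInt : Integrable (fun ω => (inner ℝ (gradient f xt) (g ω) : ℝ)) P :=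
    hgInt.const_inner _
  have hint1 : Integrable (fun ω => (f xt - f xstar)
      - γ * (inner ℝ (gradient f xt) (g ω) : ℝ)) P :=
    (integrable_const _).sub (hinnerInt.const_mul γ)
  have hint2 : Integrable (fun ω => L / 2 * γ ^ 2 * ‖g ω‖ ^ 2) P :=
    hg2Int.const_mul _
  have hRHSint : Integrable (fun ω => (f xt - f xstar)
      - γ * (inner ℝ (gradient f xt) (g ω) : ℝ) + L / 2 * γ ^ 2 * ‖g ω‖ ^ 2) P :=
    hint1.add hint2
  have hmono : ∫ ω, (f (xt - γ • g ω) - f xstar) ∂P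
      ≤ ∫ ω, ((f xt - f xstar) - γ * (inner ℝ (gradient f xt) (g ω) : ℝ)
        + L / 2 * γ ^ 2 * ‖g ω‖ ^ 2) ∂P :=
    integral_mono hLHSint hRHSint key
  have hEg : ∫ ω, g ω ∂P = gradient f xt - lam • gradient f θ := by
    have h1 : ∫ ω, lam • G ω θ ∂P = lam • gradient f θ := by
      rw [integral_smul, hunbiased]
    rw [hgdef, integral_sub (hGint xt) hsmulInt, hunbiased, h1]
  have hEinner : ∫ ω, (inner ℝ (gradient f xt) (g ω) : ℝ) ∂P
      = ‖gradient f xt‖ ^ 2 - lam * (inner ℝ (gradient f xt) (gradient f θ) : ℝ) := by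
    rw [integral_inner hgInt, hEg, inner_sub_right, real_inner_smul_right,
      real_inner_self_eq_norm_sq]
  have hRHSval : ∫ ω, ((f xt - f xstar) - γ * (inner ℝ (gradient f xt) (g ω) : ℝ)
      + L / 2 * γ ^ 2 * ‖g ω‖ ^ 2) ∂P
      = (f xt - f xstar)
        - γ * (‖gradient f xt‖ ^ 2 - lam * (inner ℝ (gradient f xt) (gradient f θ) : ℝ))
        + L / 2 * γ ^ 2 * ∫ ω, ‖g ω‖ ^ 2 ∂P := by
    rw [integral_add hint1 hint2,
      integral_sub (integrable_const (f xt - f xstar)) (hinnerInt.const_mul γ),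
      integral_const_mul, integral_const_mul, hEinner, integral_const]
    simp [measure_univ]
  rw [hRHSval] at hmono
  -- algebra
  have hyoung : lam * (inner ℝ (gradient f xt) (gradient f θ) : ℝ)
      ≤ (1/4) * ‖gradient f xt‖ ^ 2 + lam ^ 2 * ‖gradient f θ‖ ^ 2 := by
    have h1 : lam * (inner ℝ (gradient f xt) (gradient f θ) : ℝ)
        ≤ |lam| * (‖gradient f xt‖ * ‖gradient f θ‖) := by
      calc lam * (inner ℝ (gradient f xt) (gradient f θ) : ℝ)
          ≤ |lam * (inner ℝ (gradient f xt) (gradient f θ) : ℝ)| := le_abs_self _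
        _ = |lam| * |(inner ℝ (gradient f xt) (gradient f θ) : ℝ)| := abs_mul _ _
        _ ≤ |lam| * (‖gradient f xt‖ * ‖gradient f θ‖) :=
            mul_le_mul_of_nonneg_left (abs_real_inner_le_norm _ _) (abs_nonneg _)
    exact young_aux _ _ _ _ h1
  have hPLt := hPL xt
  have hγμ : 4 * Lexp * L * γ ≤ μ := by
    have h := (le_div_iff₀ (by positivity : (0:ℝ) < 4 * Lexp * L)).mp hγle
    linarith
  -- assemble
  have c1 : L / 2 * γ ^ 2 * ∫ ω, ‖g ω‖ ^ 2 ∂P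
      ≤ 2 * L * Lexp * γ ^ 2 * (f xt - f xstar)
        + L * γ ^ 2 * ∫ ω, ‖b ω‖ ^ 2 ∂P := by
    linarith [mul_le_mul_of_nonneg_left hEg2
      (by positivity : (0:ℝ) ≤ L / 2 * γ ^ 2)]
  have c2 : γ * (lam * (inner ℝ (gradient f xt) (gradient f θ) : ℝ))
      ≤ γ / 4 * ‖gradient f xt‖ ^ 2 + γ * lam ^ 2 * ‖gradient f θ‖ ^ 2 := by
    linarith [mul_le_mul_of_nonneg_left hyoung hγ.le]
  have c3 : 3 / 2 * γ * μ * (f xt - f xstar) ≤ 3 / 4 * γ * ‖gradient f xt‖ ^ 2 := by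
    linarith [mul_le_mul_of_nonneg_left hPLt (by positivity : (0:ℝ) ≤ 3 / 4 * γ)]
  have c4 : 2 * L * Lexp * γ ^ 2 * (f xt - f xstar)
      ≤ 1 / 2 * γ * μ * (f xt - f xstar) := by
    linarith [mul_le_mul_of_nonneg_right hγμ
      (mul_nonneg (by positivity : (0:ℝ) ≤ γ / 2) hΔ)]
  linarith [hmono, c1, c2, c3, c4]
end

section
/- Under the PL condition and expected smoothness, the bias-corrected distillation iterates x^{t+1} = x^t - γ(∇f_ξ(x^t) - ∇f_ξ(θ) + ∇f(θ)) with γ ≤ μ/(3 L L_exp) satisfy the one-step bound E_t[f(x^{t+1}) - f*] ≤ (1-γμ)(f(x^t) - f*) + 3L(L + L_exp)γ²(f(θ) - f*). -/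
open MeasureTheory

set_option maxHeartbeats 1000000 in
theorem bias_corrected_one_step_pl {d : ℕ} {Ω : Type*} [MeasureSpace Ω]
    (P : Measure Ω) [IsProbabilityMeasure P]
    (f : EuclideanSpace ℝ (Fin d) → ℝ) (hdiff : Differentiable ℝ f)
    (μ L Lexp γ : ℝ) (hμ : 0 < μ) (hL : 0 < L) (hLexp : 0 < Lexp)
    (hγ : 0 < γ) (hγle : γ ≤ μ / (3 * L * Lexp))
    (xstar : EuclideanSpace ℝ (Fin d)) (hmin : ∀ y, f xstar ≤ f y)
    (hsmooth : ∀ x y, f y ≤ f x + (inner ℝ (gradient f x) (y - x) : ℝ)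
      + L / 2 * ‖y - x‖ ^ 2)
    (hPL : ∀ x, ‖gradient f x‖ ^ 2 ≥ 2 * μ * (f x - f xstar))
    (G : Ω → EuclideanSpace ℝ (Fin d) → EuclideanSpace ℝ (Fin d))
    (hGint : ∀ x, Integrable (fun ω => G ω x) P)
    (hG2int : ∀ x y : EuclideanSpace ℝ (Fin d),
      Integrable (fun ω => ‖G ω x - G ω y‖ ^ 2) P)
    (hunbiased : ∀ x, ∫ ω, G ω x ∂P = gradient f x)
    (hES : ∀ x, ∫ ω, ‖G ω x - G ω xstar‖ ^ 2 ∂P ≤ 2 * Lexp * (f x - f xstar))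
    (θ xt : EuclideanSpace ℝ (Fin d))
    (hfint : Integrable
      (fun ω => f (xt - γ • (G ω xt - G ω θ + gradient f θ))) P) :
    ∫ ω, (f (xt - γ • (G ω xt - G ω θ + gradient f θ)) - f xstar) ∂P
      ≤ (1 - γ * μ) * (f xt - f xstar)
        + 3 * L * (L + Lexp) * γ ^ 2 * (f θ - f xstar) := by
  set c : EuclideanSpace ℝ (Fin d) := gradient f θ with hc
  set c' : EuclideanSpace ℝ (Fin d) := gradient f xt with hc'
  set g : Ω → EuclideanSpace ℝ (Fin d) := fun ω => G ω xt - G ω θ + c with hg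
  have hA : (0:ℝ) ≤ f xt - f xstar := sub_nonneg.2 (hmin xt)
  have hB : (0:ℝ) ≤ f θ - f xstar := sub_nonneg.2 (hmin θ)
  -- integrability of g
  have hsubint : Integrable (fun ω => G ω xt - G ω θ) P := (hGint xt).sub (hGint θ)
  have hgint : Integrable g P := hsubint.add (integrable_const c)
  -- ‖c‖² ≤ 2L(fθ - f*)
  have hcbound : ‖c‖ ^ 2 ≤ 2 * L * (f θ - f xstar) := by
    have h1 := hsmooth θ (θ - L⁻¹ • c)
    have h2 := hmin (θ - L⁻¹ • c)
    rw [show θ - L⁻¹ • c - θ = -(L⁻¹ • c) by abel] at h1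
    rw [inner_neg_right, inner_smul_right, ← hc, real_inner_self_eq_norm_sq,
      norm_neg, norm_smul] at h1
    have hLinv : |L⁻¹| = L⁻¹ := abs_of_pos (by positivity)
    rw [Real.norm_eq_abs, hLinv, mul_pow] at h1
    have h4 : L⁻¹ * ‖c‖ ^ 2 - L / 2 * ((L⁻¹) ^ 2 * ‖c‖ ^ 2) = ‖c‖ ^ 2 / (2 * L) := by
      field_simp; ring
    have h5 : ‖c‖ ^ 2 / (2 * L) ≤ f θ - f xstar := by linarith
    rw [div_le_iff₀ (by positivity)] at h5
    calc ‖c‖ ^ 2 ≤ (f θ - f xstar) * (2 * L) := h5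
      _ = 2 * L * (f θ - f xstar) := by ring
  -- pointwise bound on ‖g‖²
  have hptsq : ∀ ω, ‖g ω‖ ^ 2 ≤ 3 * ‖G ω xt - G ω xstar‖ ^ 2
      + 3 * ‖G ω θ - G ω xstar‖ ^ 2 + 3 * ‖c‖ ^ 2 := by
    intro ω
    have hdecomp : g ω = (G ω xt - G ω xstar) - (G ω θ - G ω xstar) + c := by
      simp only [hg]; abel
    have hn : ‖g ω‖ ≤ ‖G ω xt - G ω xstar‖ + ‖G ω θ - G ω xstar‖ + ‖c‖ := by
      rw [hdecomp]
      exact (norm_add_le _ _).trans (add_le_add_left (norm_sub_le _ _) _)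
    have hsq : ‖g ω‖ ^ 2 ≤ (‖G ω xt - G ω xstar‖ + ‖G ω θ - G ω xstar‖ + ‖c‖) ^ 2 := by
      have := mul_self_le_mul_self (norm_nonneg (g ω)) hn
      simpa [pow_two] using this
    nlinarith [sq_nonneg (‖G ω xt - G ω xstar‖ - ‖G ω θ - G ω xstar‖),
      sq_nonneg (‖G ω xt - G ω xstar‖ - ‖c‖), sq_nonneg (‖G ω θ - G ω xstar‖ - ‖c‖)]
  have hb1 : Integrable (fun ω => 3 * ‖G ω xt - G ω xstar‖ ^ 2
      + 3 * ‖G ω θ - G ω xstar‖ ^ 2) P :=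
    ((hG2int xt xstar).const_mul 3).add ((hG2int θ xstar).const_mul 3)
  have hb : Integrable (fun ω => 3 * ‖G ω xt - G ω xstar‖ ^ 2
      + 3 * ‖G ω θ - G ω xstar‖ ^ 2 + 3 * ‖c‖ ^ 2) P :=
    hb1.add (integrable_const _)
  -- integrability of ‖g‖²
  have hgsq_int : Integrable (fun ω => ‖g ω‖ ^ 2) P := by
    have hmeas : AEStronglyMeasurable (fun ω => ‖g ω‖ ^ 2) P := by
      have := hgint.aestronglyMeasurable.norm
      simpa [pow_two, Pi.mul_def] using this.mul this
    refine hb.mono' hmeas (Filter.Eventually.of_forall fun ω => ?_)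
    rw [Real.norm_eq_abs, abs_of_nonneg (by positivity)]
    exact hptsq ω
  -- bound on ∫ ‖g‖²
  have hgsq_bound : ∫ ω, ‖g ω‖ ^ 2 ∂P ≤
      6 * Lexp * (f xt - f xstar) + (6 * Lexp + 6 * L) * (f θ - f xstar) := by
    have hle : ∫ ω, ‖g ω‖ ^ 2 ∂P ≤ ∫ ω, (3 * ‖G ω xt - G ω xstar‖ ^ 2
        + 3 * ‖G ω θ - G ω xstar‖ ^ 2 + 3 * ‖c‖ ^ 2) ∂P :=
      integral_mono hgsq_int hb hptsq
    rw [integral_add hb1 (integrable_const _),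
      integral_add ((hG2int xt xstar).const_mul 3) ((hG2int θ xstar).const_mul 3),
      integral_const_mul, integral_const_mul, integral_const] at hle
    simp only [measure_univ, probReal_univ, ENNReal.toReal_one, one_smul, smul_eq_mul, one_mul] at hle
    have h1 := hES xt
    have h2 := hES θ
    nlinarith
  -- mean of g
  have hEg : ∫ ω, g ω ∂P = c' := by
    rw [hg, integral_add hsubint (integrable_const c),
      integral_sub (hGint xt) (hGint θ), hunbiased, hunbiased, integral_const]
    simp [hc, hc']
  -- integrability of inner term
  have hinner_int : Integrable (fun ω => (inner ℝ c' (g ω) : ℝ)) P :=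
    hgint.const_inner c'
  -- pointwise smoothness bound
  have hpt : ∀ ω, f (xt - γ • (G ω xt - G ω θ + c)) - f xstar ≤
      (f xt - f xstar) - γ * (inner ℝ c' (g ω) : ℝ) + L / 2 * γ ^ 2 * ‖g ω‖ ^ 2 := by
    intro ω
    have h1 := hsmooth xt (xt - γ • g ω)
    rw [show xt - γ • g ω - xt = -(γ • g ω) by abel, inner_neg_right,
      inner_smul_right, ← hc', norm_neg, norm_smul, Real.norm_eq_abs,
      abs_of_pos hγ, mul_pow] at h1
    simp only [hg] at h1 ⊢
    linarith [h1]
  -- integrate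
  have hsub1 : Integrable (fun ω => (f xt - f xstar) - γ * (inner ℝ c' (g ω) : ℝ)) P :=
    (integrable_const _).sub (hinner_int.const_mul γ)
  have hrhs_int : Integrable (fun ω => (f xt - f xstar) - γ * (inner ℝ c' (g ω) : ℝ)
      + L / 2 * γ ^ 2 * ‖g ω‖ ^ 2) P :=
    hsub1.add (hgsq_int.const_mul (L / 2 * γ ^ 2))
  have hlhs_int : Integrable
      (fun ω => f (xt - γ • (G ω xt - G ω θ + c)) - f xstar) P :=
    hfint.sub (integrable_const (f xstar))
  have hstep : ∫ ω, (f (xt - γ • (G ω xt - G ω θ + c)) - f xstar) ∂P ≤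
      (f xt - f xstar) - γ * (inner ℝ c' c' : ℝ)
        + L / 2 * γ ^ 2 * ∫ ω, ‖g ω‖ ^ 2 ∂P := by
    have h := integral_mono hlhs_int hrhs_int hpt
    rw [integral_add hsub1 (hgsq_int.const_mul (L / 2 * γ ^ 2)),
      integral_sub (integrable_const _) (hinner_int.const_mul γ),
      integral_const_mul, integral_const_mul, integral_inner hgint, hEg,
      integral_const] at h
    simpa using h
  have hinner_self : (inner ℝ c' c' : ℝ) = ‖c'‖ ^ 2 := real_inner_self_eq_norm_sq c'
  rw [hinner_self] at hstep
  have hγμ : 3 * L * Lexp * γ ≤ μ := by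
    rw [le_div_iff₀ (by positivity)] at hγle
    linarith [hγle]
  -- final arithmetic
  have h3 : L / 2 * γ ^ 2 * ∫ ω, ‖g ω‖ ^ 2 ∂P ≤
      L / 2 * γ ^ 2 * (6 * Lexp * (f xt - f xstar)
        + (6 * Lexp + 6 * L) * (f θ - f xstar)) := by gcongr
  have hq : 3 * L * Lexp * γ ^ 2 ≤ γ * μ := by nlinarith [mul_le_mul_of_nonneg_right hγμ hγ.le]
  have hf1 : 2 * (γ * μ) * (f xt - f xstar) ≤ γ * ‖c'‖ ^ 2 := by
    have := mul_le_mul_of_nonneg_left (hPL xt) (le_of_lt hγ)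
    linarith [this]
  have hf2 : L / 2 * γ ^ 2 * (6 * Lexp * (f xt - f xstar)
      + (6 * Lexp + 6 * L) * (f θ - f xstar))
      = 3 * L * Lexp * γ ^ 2 * (f xt - f xstar)
        + 3 * L * (L + Lexp) * γ ^ 2 * (f θ - f xstar) := by ring
  have hf3 : 3 * L * Lexp * γ ^ 2 * (f xt - f xstar) ≤ γ * μ * (f xt - f xstar) :=
    mul_le_mul_of_nonneg_right hq hA
  have hexp : (1 - γ * μ) * (f xt - f xstar)
      = (f xt - f xstar) - γ * μ * (f xt - f xstar) := by ring
  linarith [hstep, h3, hf1, hf3]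
end

section
/- If f is L-smooth and μ-strongly convex, and δ is a zero-mean square-integrable random vector, then for all x, y: f(y) ≥ f(x) + ⟨E[∇f(x + δ)], y - x⟩ + (μ/2)‖y - x‖² - ((L-μ)/2) E[‖δ‖²]. -/
open MeasureTheory

theorem strongly_convex_perturbed_lower_bound {d : ℕ} {Ω : Type*} [MeasureSpace Ω]
    (P : Measure Ω) [IsProbabilityMeasure P]
    (f : EuclideanSpace ℝ (Fin d) → ℝ) (hdiff : Differentiable ℝ f)
    (L μ : ℝ) (hL : 0 < L) (hμ : 0 < μ)
    (hsmooth : ∀ u v, f u ≤ f v + (inner ℝ (gradient f v) (u - v) : ℝ)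
      + L / 2 * ‖u - v‖ ^ 2)
    (hsc : ∀ u v, f u ≥ f v + (inner ℝ (gradient f v) (u - v) : ℝ)
      + μ / 2 * ‖u - v‖ ^ 2)
    (δ : Ω → EuclideanSpace ℝ (Fin d))
    (hδint : Integrable δ P) (hδ2 : Integrable (fun ω => ‖δ ω‖ ^ 2) P)
    (hδmean : ∫ ω, δ ω ∂P = 0)
    (hgradint : ∀ x, Integrable (fun ω => gradient f (x + δ ω)) P)
    (hfint : ∀ x, Integrable (fun ω => f (x + δ ω)) P) :
    ∀ x y : EuclideanSpace ℝ (Fin d),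
      f y ≥ f x + (inner ℝ (∫ ω, gradient f (x + δ ω) ∂P) (y - x) : ℝ)
        + μ / 2 * ‖y - x‖ ^ 2 - (L - μ) / 2 * ∫ ω, ‖δ ω‖ ^ 2 ∂P := by
  intro x y
  set v : EuclideanSpace ℝ (Fin d) := y - x with hv
  set G : EuclideanSpace ℝ (Fin d) := ∫ ω, gradient f (x + δ ω) ∂P with hG
  -- integrability of pieces
  have hi1 : Integrable (fun ω => (inner ℝ v (gradient f (x + δ ω)) : ℝ)) P :=
    (innerSL ℝ v).integrable_comp (hgradint x)
  have hi2 : Integrable (fun ω => (inner ℝ v (δ ω) : ℝ)) P :=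
    (innerSL ℝ v).integrable_comp hδint
  -- pointwise lower bound
  have hpt : ∀ ω, (f x + μ / 2 * ‖v‖ ^ 2) + (inner ℝ v (gradient f (x + δ ω)) : ℝ)
      + (-μ) * (inner ℝ v (δ ω) : ℝ) + (μ / 2 - L / 2) * ‖δ ω‖ ^ 2 ≤ f y := by
    intro ω
    have h1 := hsc y (x + δ ω)
    have h2 := hsmooth x (x + δ ω)
    have e1 : y - (x + δ ω) = v - δ ω := by rw [hv]; abel
    have e2 : x - (x + δ ω) = -δ ω := by abel
    rw [e1] at h1
    rw [e2] at h2
    have e3 : ‖v - δ ω‖ ^ 2 = ‖v‖ ^ 2 - 2 * inner ℝ v (δ ω) + ‖δ ω‖ ^ 2 := by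
      rw [norm_sub_sq_real]
    have e4 : (inner ℝ (gradient f (x + δ ω)) (v - δ ω) : ℝ)
        = inner ℝ (gradient f (x + δ ω)) v - inner ℝ (gradient f (x + δ ω)) (δ ω) := by
      rw [inner_sub_right]
    have e5 : (inner ℝ (gradient f (x + δ ω)) (-δ ω) : ℝ)
        = - inner ℝ (gradient f (x + δ ω)) (δ ω) := by rw [inner_neg_right]
    have e6 : ‖-δ ω‖ = ‖δ ω‖ := norm_neg _
    rw [e3, e4] at h1
    rw [e5, e6] at h2
    have e7 : (inner ℝ v (gradient f (x + δ ω)) : ℝ)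
        = inner ℝ (gradient f (x + δ ω)) v := real_inner_comm _ _
    rw [e7]
    linarith
  -- integrability of the full integrand
  have hintAll : Integrable (fun ω => (f x + μ / 2 * ‖v‖ ^ 2)
      + (inner ℝ v (gradient f (x + δ ω)) : ℝ)
      + (-μ) * (inner ℝ v (δ ω) : ℝ) + (μ / 2 - L / 2) * ‖δ ω‖ ^ 2) P :=
    (((integrable_const _).add hi1).add (hi2.const_mul _)).add (hδ2.const_mul _)
  -- integral of the lower bound
  have hIg : ∫ ω, (inner ℝ v (gradient f (x + δ ω)) : ℝ) ∂P = inner ℝ v G :=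
    integral_inner (hgradint x) v
  have hIδ : ∫ ω, (inner ℝ v (δ ω) : ℝ) ∂P = 0 := by
    rw [integral_inner hδint, hδmean, inner_zero_right]
  have hI : ∫ ω, ((f x + μ / 2 * ‖v‖ ^ 2)
      + (inner ℝ v (gradient f (x + δ ω)) : ℝ)
      + (-μ) * (inner ℝ v (δ ω) : ℝ) + (μ / 2 - L / 2) * ‖δ ω‖ ^ 2) ∂P
      = (f x + μ / 2 * ‖v‖ ^ 2) + (inner ℝ v G : ℝ)
        + (μ / 2 - L / 2) * ∫ ω, ‖δ ω‖ ^ 2 ∂P := by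
    have h1 : ∫ ω, ((f x + μ / 2 * ‖v‖ ^ 2)
        + (inner ℝ v (gradient f (x + δ ω)) : ℝ)
        + (-μ) * (inner ℝ v (δ ω) : ℝ) + (μ / 2 - L / 2) * ‖δ ω‖ ^ 2) ∂P
        = (∫ ω, ((f x + μ / 2 * ‖v‖ ^ 2)
            + (inner ℝ v (gradient f (x + δ ω)) : ℝ)
            + (-μ) * (inner ℝ v (δ ω) : ℝ)) ∂P)
          + ∫ ω, (μ / 2 - L / 2) * ‖δ ω‖ ^ 2 ∂P :=
      integral_add (((integrable_const _).add hi1).add (hi2.const_mul _))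
        (hδ2.const_mul _)
    have h2 : ∫ ω, ((f x + μ / 2 * ‖v‖ ^ 2)
        + (inner ℝ v (gradient f (x + δ ω)) : ℝ)
        + (-μ) * (inner ℝ v (δ ω) : ℝ)) ∂P
        = (∫ ω, ((f x + μ / 2 * ‖v‖ ^ 2)
            + (inner ℝ v (gradient f (x + δ ω)) : ℝ)) ∂P)
          + ∫ ω, (-μ) * (inner ℝ v (δ ω) : ℝ) ∂P :=
      integral_add ((integrable_const _).add hi1) (hi2.const_mul _)
    have h3 : ∫ ω, ((f x + μ / 2 * ‖v‖ ^ 2)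
        + (inner ℝ v (gradient f (x + δ ω)) : ℝ)) ∂P
        = (∫ _ω, (f x + μ / 2 * ‖v‖ ^ 2) ∂P)
          + ∫ ω, (inner ℝ v (gradient f (x + δ ω)) : ℝ) ∂P :=
      integral_add (integrable_const _) hi1
    rw [h1, h2, h3, hIg, integral_const_mul, hIδ, integral_const_mul, integral_const]
    simp [measure_univ]
  -- conclude
  have hle : ∫ ω, ((f x + μ / 2 * ‖v‖ ^ 2)
      + (inner ℝ v (gradient f (x + δ ω)) : ℝ)
      + (-μ) * (inner ℝ v (δ ω) : ℝ) + (μ / 2 - L / 2) * ‖δ ω‖ ^ 2) ∂P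
      ≤ ∫ _ω, f y ∂P :=
    integral_mono hintAll (integrable_const _) hpt
  rw [hI, integral_const] at hle
  simp only [measure_univ, probReal_univ, ENNReal.toReal_one, one_smul, smul_eq_mul, one_mul] at hle
  have e8 : (inner ℝ G v : ℝ) = inner ℝ v G := real_inner_comm _ _
  rw [e8]
  linarith
end

section
/- Under the expected smoothness assumption and the teacher-proximity condition f(θ) - f* ≤ σ(x*)σ(θ)/L_exp, the variance-reduction ratio satisfies 1 - ρ²(x*,θ)(1-β(θ))/(1+β(θ)/(cγ)) ≤ (2L_exp/(σ(x*)σ(θ)) + (2L/(cγσ²(θ)))) (f(θ) - f*), where σ²(x) = E[‖∇f_ξ(x)‖²]. -/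
open MeasureTheory

set_option maxHeartbeats 1000000
theorem vr_aux {K t R1 S1 S2 : ℝ} (hK1 : K ≤ 1) (htnn : 0 ≤ t)
    (hkey : 1 - K ≤ R1) (h3 : R1 ≤ S1) (h4 : t ≤ S2) :
    1 - K / (1 + t) ≤ S1 + S2 := by
  have h1t : (0:ℝ) < 1 + t := by linarith
  have e : 1 - K / (1 + t) = (1 + t - K) / (1 + t) := by field_simp
  rw [e]
  calc (1 + t - K) / (1 + t) ≤ 1 + t - K := div_le_self (by linarith) (by linarith)
  _ ≤ S1 + S2 := by linarith

theorem variance_reduction_factor_bound {d : ℕ} {Ω : Type*} [MeasureSpace Ω]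
    (P : Measure Ω) [IsProbabilityMeasure P]
    -- A ω = ∇f_ξ(x*), B ω = ∇f_ξ(θ)
    (A B : Ω → EuclideanSpace ℝ (Fin d))
    (hA2 : Integrable (fun ω => ‖A ω‖ ^ 2) P)
    (hB2 : Integrable (fun ω => ‖B ω‖ ^ 2) P)
    (hAB : Integrable (fun ω => (inner ℝ (A ω) (B ω) : ℝ)) P)
    (hABdiff : Integrable (fun ω => ‖B ω - A ω‖ ^ 2) P)
    (hAint : Integrable A P) (hBint : Integrable B P)
    (hAmean : ∫ ω, A ω ∂P = 0)
    (g : EuclideanSpace ℝ (Fin d)) (hg : g = ∫ ω, B ω ∂P)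
    (σA σB : ℝ)
    (hσA : σA = Real.sqrt (∫ ω, ‖A ω‖ ^ 2 ∂P))
    (hσB : σB = Real.sqrt (∫ ω, ‖B ω‖ ^ 2 ∂P))
    (hApos : 0 < ∫ ω, ‖A ω‖ ^ 2 ∂P)
    (hBpos : 0 < ∫ ω, ‖B ω‖ ^ 2 ∂P)
    (L Lexp c γ : ℝ) (hL : 0 < L) (hLexp : 0 < Lexp) (hc : 0 < c) (hγ : 0 < γ)
    -- D = f(θ) - f*
    (D : ℝ) (hD : 0 ≤ D)
    -- expected smoothness between θ and x*
    (hES : ∫ ω, ‖B ω - A ω‖ ^ 2 ∂P ≤ 2 * Lexp * D)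
    -- L-smoothness consequence
    (hgL : ‖g‖ ^ 2 ≤ 2 * L * D)
    -- teacher proximity
    (hprox : D ≤ σA * σB / Lexp)
    (β : ℝ) (hβ : β = ‖g‖ ^ 2 / σB ^ 2)
    (ρ : ℝ) (hρ : ρ = (∫ ω, (inner ℝ (A ω) (B ω) : ℝ) ∂P) /
      (σA * Real.sqrt (σB ^ 2 - ‖g‖ ^ 2))) :
    1 - ρ ^ 2 * (1 - β) / (1 + β / (c * γ))
      ≤ (2 * Lexp / (σA * σB) + 2 * L / (c * γ * σB ^ 2)) * D := by

  set S := ∫ ω, (inner ℝ (A ω) (B ω) : ℝ) ∂P with hSdef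
  set EE := ∫ ω, ‖B ω - A ω‖ ^ 2 ∂P with hEEdef
  have ha2 : σA ^ 2 = ∫ ω, ‖A ω‖ ^ 2 ∂P := by rw [hσA, Real.sq_sqrt hApos.le]
  have hb2 : σB ^ 2 = ∫ ω, ‖B ω‖ ^ 2 ∂P := by rw [hσB, Real.sq_sqrt hBpos.le]
  have haP : 0 < σA := by rw [hσA]; exact Real.sqrt_pos.mpr hApos
  have hbP : 0 < σB := by rw [hσB]; exact Real.sqrt_pos.mpr hBpos
  -- EE = σA² + σB² - 2S
  have hpt : ∀ ω, ‖B ω - A ω‖ ^ 2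
      = ‖B ω‖ ^ 2 + ‖A ω‖ ^ 2 - 2 * (inner ℝ (A ω) (B ω) : ℝ) := by
    intro ω
    rw [norm_sub_sq_real, real_inner_comm]; ring
  have hIBA : Integrable (fun ω => ‖B ω‖ ^ 2 + ‖A ω‖ ^ 2) P := hB2.add hA2
  have hEeq : EE = σA ^ 2 + σB ^ 2 - 2 * S := by
    rw [hEEdef, ha2, hb2, hSdef]
    simp_rw [hpt]
    rw [integral_sub hIBA (hAB.const_mul 2), integral_add hB2 hA2, integral_const_mul]
    ring
  have hE0 : 0 ≤ EE := integral_nonneg fun ω => sq_nonneg _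
  -- Cauchy–Schwarz: S² ≤ σA²σB²
  have ha2P : (0:ℝ) < σA ^ 2 := by positivity
  have hCS : S ^ 2 ≤ σA ^ 2 * σB ^ 2 := by
    set lam : ℝ := S / σA ^ 2 with hlam
    have hpt2 : ∀ ω, ‖B ω - lam • A ω‖ ^ 2
        = ‖B ω‖ ^ 2 - (2 * lam) * (inner ℝ (A ω) (B ω) : ℝ) + lam ^ 2 * ‖A ω‖ ^ 2 := by
      intro ω
      rw [norm_sub_sq_real, real_inner_smul_right, real_inner_comm, norm_smul]
      simp [mul_pow, sq_abs]; ring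
    have hI1 : Integrable
        (fun ω => ‖B ω‖ ^ 2 - (2 * lam) * (inner ℝ (A ω) (B ω) : ℝ)) P :=
      hB2.sub (hAB.const_mul _)
    have h0 : 0 ≤ ∫ ω, (‖B ω‖ ^ 2 - (2 * lam) * (inner ℝ (A ω) (B ω) : ℝ)
        + lam ^ 2 * ‖A ω‖ ^ 2) ∂P := by
      refine integral_nonneg fun ω => ?_
      rw [← hpt2 ω]; positivity
    rw [integral_add hI1 (hA2.const_mul _), integral_sub hB2 (hAB.const_mul _),
      integral_const_mul, integral_const_mul, ← ha2, ← hb2] at h0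
    have e : σB ^ 2 - 2 * lam * S + lam ^ 2 * σA ^ 2 = σB ^ 2 - S ^ 2 / σA ^ 2 := by
      rw [hlam]; field_simp; ring
    rw [show 2 * lam * S = 2 * lam * S from rfl] at h0
    have h0' : S ^ 2 / σA ^ 2 ≤ σB ^ 2 := by
      have h0'' : 0 ≤ σB ^ 2 - S ^ 2 / σA ^ 2 := by rw [← e]; linarith [h0]
      linarith
    calc S ^ 2 = S ^ 2 / σA ^ 2 * σA ^ 2 := by field_simp
    _ ≤ σB ^ 2 * σA ^ 2 := mul_le_mul_of_nonneg_right h0' ha2P.le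
    _ = σA ^ 2 * σB ^ 2 := mul_comm _ _
  -- variance of B nonneg, and the degenerate case
  have hptv : ∀ ω, ‖B ω - g‖ ^ 2 = ‖B ω‖ ^ 2 - 2 * (inner ℝ g (B ω) : ℝ) + ‖g‖ ^ 2 := by
    intro ω; rw [norm_sub_sq_real, real_inner_comm]; try ring
  have hI2 : Integrable (fun ω => ‖B ω‖ ^ 2 - 2 * (inner ℝ g (B ω) : ℝ)) P :=
    hB2.sub ((hBint.const_inner g).const_mul 2)
  have hintv : Integrable (fun ω => ‖B ω - g‖ ^ 2) P := by
    have h3 : Integrable (fun ω => ‖B ω‖ ^ 2 - 2 * (inner ℝ g (B ω) : ℝ) + ‖g‖ ^ 2) P :=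
      hI2.add (integrable_const _)
    exact h3.congr (Filter.Eventually.of_forall fun ω => (hptv ω).symm)
  have hvarEq : ∫ ω, ‖B ω - g‖ ^ 2 ∂P = σB ^ 2 - ‖g‖ ^ 2 := by
    simp_rw [hptv]
    rw [integral_add hI2 (integrable_const _), integral_sub hB2
        ((hBint.const_inner g).const_mul 2),
      integral_const_mul, integral_inner hBint, ← hg, real_inner_self_eq_norm_sq,
      integral_const, ← hb2]
    simp; ring
  have hvnn : 0 ≤ σB ^ 2 - ‖g‖ ^ 2 := by
    rw [← hvarEq]; exact integral_nonneg fun ω => sq_nonneg _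
  have hS0 : σB ^ 2 - ‖g‖ ^ 2 = 0 → S = 0 := by
    intro hv0
    have hzero : (fun ω => ‖B ω - g‖ ^ 2) =ᶠ[ae P] 0 :=
      (integral_eq_zero_iff_of_nonneg (fun ω => sq_nonneg _) hintv).mp
        (by rw [hvarEq, hv0])
    have hBg : B =ᶠ[ae P] fun _ => g := by
      filter_upwards [hzero] with ω hω
      have h4 : ‖B ω - g‖ = 0 := by
        have h5 := hω
        simp only [Pi.zero_apply, pow_eq_zero_iff] at h5
        simpa using h5
      simpa [sub_eq_zero] using norm_eq_zero.mp h4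
    have h6 : S = ∫ ω, (inner ℝ (A ω) g : ℝ) ∂P := by
      rw [hSdef]
      refine integral_congr_ae ?_
      filter_upwards [hBg] with ω hω
      rw [hω]
    rw [h6]
    simp_rw [real_inner_comm]
    rw [integral_inner hAint, hAmean, inner_zero_right]
  -- ρ²(1-β) = S²/(σA²σB²)
  have hρβ : ρ ^ 2 * (1 - β) = S ^ 2 / (σA ^ 2 * σB ^ 2) := by
    rcases eq_or_lt_of_le hvnn with hv0 | hvpos
    · rw [hρ, hS0 hv0.symm]
      simp
    · have hβeq : 1 - β = (σB ^ 2 - ‖g‖ ^ 2) / σB ^ 2 := by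
        rw [hβ]; field_simp
      rw [hρ, hβeq, div_pow, mul_pow, Real.sq_sqrt hvnn]
      field_simp
  -- key inequality 1 - K ≤ EE/(σAσB)
  have h1 : σA ^ 2 * σB ^ 2 - S ^ 2 ≤ σA * σB * EE := by
    nlinarith [sq_nonneg (S - σA * σB), sq_nonneg (σA - σB), mul_pos haP hbP, hEeq]
  have hkey : 1 - S ^ 2 / (σA ^ 2 * σB ^ 2) ≤ EE / (σA * σB) := by
    have e1 : 1 - S ^ 2 / (σA ^ 2 * σB ^ 2)
        = (σA ^ 2 * σB ^ 2 - S ^ 2) / (σA ^ 2 * σB ^ 2) := by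
      field_simp
    have e2 : EE / (σA * σB) = (σA * σB * EE) / (σA ^ 2 * σB ^ 2) := by
      rw [div_eq_div_iff (by positivity) (by positivity)]; ring
    rw [e1, e2]
    exact div_le_div_of_nonneg_right h1 (by positivity)
  -- final assembly
  have hβnn : 0 ≤ β := by rw [hβ]; positivity
  have htnn : 0 ≤ β / (c * γ) := by positivity
  have hK1 : S ^ 2 / (σA ^ 2 * σB ^ 2) ≤ 1 := by
    rw [div_le_one (by positivity)]; exact hCS
  have step3 : EE / (σA * σB) ≤ 2 * Lexp * D / (σA * σB) :=
    div_le_div_of_nonneg_right hES (by positivity)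
  have step4 : β / (c * γ) ≤ 2 * L * D / (c * γ * σB ^ 2) := by
    rw [hβ, div_div, show σB ^ 2 * (c * γ) = c * γ * σB ^ 2 from by ring]
    exact div_le_div_of_nonneg_right hgL (by positivity)
  have efin : (2 * Lexp / (σA * σB) + 2 * L / (c * γ * σB ^ 2)) * D
      = 2 * Lexp * D / (σA * σB) + 2 * L * D / (c * γ * σB ^ 2) := by ring
  rw [hρβ, efin]
  exact vr_aux hK1 htnn hkey step3 step4
end
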